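/- Let Γ be an acyclic digraph, Π = {π₁,…,πₙ} a collection of pairwise non-overlapping paths, and fix vertices I, F. For any nonempty subset {i₁,…,i_k} ⊆ {1,…,n}, the number of directed paths from I to F containing each of π_{i₁},…,π_{i_k} as a subpath equals the sum over all orderings (j₁,…,j_k) of {i₁,…,i_k} of the products γ(I→I_{j_k})·wt(π_{j_k})·γ(F_{j_k}→I_{j_{k-1}})·…·γ(F_{j_1}→F), where all weights are 1 and γ counts directed paths; moreover, for each ordering the product counts exactly the paths containing π_{j_k},…,π_{j_1} in that precise order along the path. -/

import Mathlib

/-- A directed path from `a` to `b` in the digraph with adjacency relation `adj`,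
represented as its (nonempty) list of vertices. -/
def IsDiPath {V : Type*} (adj : V → V → Prop) (a b : V) (l : List V) : Prop :=
  l.head? = some a ∧ l.getLast? = some b ∧ l.Chain' adj

/-- A digraph is acyclic if it contains no directed cycle. -/
def DigraphAcyclic {V : Type*} (adj : V → V → Prop) : Prop :=
  ∀ v : V, ¬ Relation.TransGen adj v v

/-- `Overlaps p₁ p₂` means that `p₂` overlaps `p₁`. -/
def Overlaps {V : Type*} (p₁ p₂ : List V) : Prop :=
  p₁ <:+: p₂ ∨ ∃ t : List V, 2 ≤ t.length ∧ t <:+ p₁ ∧ t <+: p₂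

/-- For an ordering `L = [j₁, j₂, …]` of indices (to be traversed in this order),
the product `γ(s → I_{j₁}) · γ(F_{j₁} → I_{j₂}) · ⋯ · γ(F_{j_last} → F)`. -/
def orderedProd {V : Type*} (γ : V → V → ℕ) {n : ℕ} (Iv Fv : Fin n → V) (F : V) :
    V → List (Fin n) → ℕ
  | s, [] => γ s F
  | s, j :: L => γ s (Iv j) * orderedProd γ Iv Fv F (Fv j) L

/-- `ContainsInOrder l ps` : the path `l` contains the paths in `ps` as subpaths,
occurring in this precise order along `l` (each next subpath occurring in the
remainder of `l` after the previous one finishes). -/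
def ContainsInOrder {V : Type*} : List V → List (List V) → Prop
  | _, [] => True
  | l, p :: ps => ∃ s t : List V, l = s ++ p ++ t ∧ ContainsInOrder (p.getLast?.toList ++ t) ps

open List

section Basic
variable {V : Type*} {adj : V → V → Prop}

theorem chain'_nodup (hac : DigraphAcyclic adj) {l : List V} (hl : l.Chain' adj) : l.Nodup := by
  by_contra h
  obtain ⟨x, hx⟩ := List.exists_duplicate_iff_not_nodup.2 h
  have hsub : [x, x] <+ l := List.duplicate_iff_sublist.1 hx
  have htg : l.Chain' (Relation.TransGen adj) := hl.imp fun a b => Relation.TransGen.single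
  have : List.Chain' (Relation.TransGen adj) [x, x] := htg.sublist hsub
  exact hac x (by simpa [List.Chain'] using this)

theorem IsDiPath.ne_nil {a b : V} {l : List V} (h : IsDiPath adj a b l) : l ≠ [] := by
  rintro rfl; simpa using h.1

theorem IsDiPath.eq_cons {a b : V} {l : List V} (h : IsDiPath adj a b l) : l = a :: l.tail := by
  cases l with
  | nil => simpa using h.1
  | cons x t =>
    have : x = a := by simpa using h.1
    simp [this]

theorem IsDiPath.eq_concat {a b : V} {l : List V} (h : IsDiPath adj a b l) :
    l = l.dropLast ++ [b] := by
  have hne := h.ne_nil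
  have : l.getLast hne = b := by
    have := h.2.1
    rw [List.getLast?_eq_getLast hne] at this
    exact Option.some.inj this
  rw [← this]
  exact (List.dropLast_append_getLast hne).symm

theorem finite_pathSet [Fintype V] (hac : DigraphAcyclic adj) (a b : V) :
    {l : List V | IsDiPath adj a b l}.Finite := by
  classical
  have h1 : Finite ↑{l : List V | l.Nodup} := (inferInstance : Finite {l : List V // l.Nodup})
  have h2 : {l : List V | l.Nodup}.Finite := Set.finite_coe_iff.mp h1
  exact h2.subset fun l hl => chain'_nodup hac hl.2.2

theorem isDiPath_glue {a b c : V} {u v : List V}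
    (hu : IsDiPath adj a b u) (hv : IsDiPath adj b c v) :
    IsDiPath adj a c (u ++ v.tail) := by
  have hvc : v = b :: v.tail := hv.eq_cons
  refine ⟨?_, ?_, ?_⟩
  · rw [head?_append, hu.1]; rfl
  · rw [getLast?_append]
    cases htv : v.tail with
    | nil =>
      have h5 : v = [b] := by rw [hvc, htv]
      have : c = b := by have h2 := hv.2.1; rw [h5] at h2; simpa using h2.symm
      simp [htv, hu.2.1, this]
    | cons y t =>
      have : v.getLast? = v.tail.getLast? := by
        conv_lhs => rw [hvc]
        rw [htv]; simp
      rw [htv] at this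
      rw [← this, hv.2.1]; rfl
  · show List.IsChain adj (u ++ v.tail); rw [isChain_append]
    refine ⟨hu.2.2, ?_, ?_⟩
    · have := hv.2.2; rw [hvc] at this; exact this.tail
    · intro x hx y hy
      have hxb : x = b := by
        rw [hu.2.1] at hx; exact (by simpa using hx : b = x).symm
      have := hv.2.2
      rw [hvc] at this; change List.IsChain adj (b :: v.tail) at this; rw [isChain_cons] at this
      exact hxb ▸ this.1 y hy

theorem append_cons_inj {α : Type*} {x : α} {a b c d : List α}
    (h : a ++ x :: b = c ++ x :: d) (hxa : x ∉ a) (hxc : x ∉ c) : a = c ∧ b = d := by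
  classical
  have hlen : a.length = c.length := by
    have h1 : (a ++ x :: b).idxOf x = a.length := by
      rw [idxOf_append_of_notMem hxa]; simp
    have h2 : (c ++ x :: d).idxOf x = c.length := by
      rw [idxOf_append_of_notMem hxc]; simp
    rw [h] at h1; rw [h1] at h2; omega
  obtain ⟨h3, h4⟩ := List.append_inj h hlen
  exact ⟨h3, by simpa using h4⟩

theorem split_count (hac : DigraphAcyclic adj) {p : List V} {bI bF : V}
    (hp : IsDiPath adj bI bF p) (a F : V) (Q : List V → Prop) :
    Set.ncard {l : List V | IsDiPath adj a F l ∧ ∃ s t, l = s ++ p ++ t ∧ Q (bF :: t)} =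
      Set.ncard {u : List V | IsDiPath adj a bI u} *
        Set.ncard {v : List V | IsDiPath adj bF F v ∧ Q v} := by
  set A := {u : List V | IsDiPath adj a bI u} with hA
  set B := {v : List V | IsDiPath adj bF F v ∧ Q v} with hB
  set T := {l : List V | IsDiPath adj a F l ∧ ∃ s t, l = s ++ p ++ t ∧ Q (bF :: t)} with hT
  set f : List V × List V → List V := fun w => w.1 ++ p.tail ++ w.2.tail with hf
  have hpc : p = bI :: p.tail := hp.eq_cons
  have hpl : p = p.dropLast ++ [bF] := hp.eq_concat
  have hfwd : ∀ u ∈ A, ∀ v ∈ B, IsDiPath adj a F (f (u, v)) ∧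
      f (u, v) = u.dropLast ++ p ++ v.tail ∧ Q (bF :: v.tail) := by
    intro u hu v hv
    have h1 : IsDiPath adj a bF (u ++ p.tail) := isDiPath_glue hu hp
    have h2 : IsDiPath adj a F ((u ++ p.tail) ++ v.tail) := isDiPath_glue h1 hv.1
    have hdec : f (u, v) = u.dropLast ++ p ++ v.tail := by
      show u ++ p.tail ++ v.tail = _
      conv_rhs => rw [hpc]
      rw [show u.dropLast ++ (bI :: p.tail) ++ v.tail = (u.dropLast ++ [bI]) ++ p.tail ++ v.tail
        by simp]
      rw [← hu.eq_concat]
    have hQ : Q (bF :: v.tail) := by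
      have : bF :: v.tail = v := hv.1.eq_cons.symm
      rw [this]; exact hv.2
    exact ⟨h2, hdec, hQ⟩
  have himg : f '' (A ×ˢ B) = T := by
    apply Set.eq_of_subset_of_subset
    · rintro l ⟨⟨u, v⟩, ⟨hu, hv⟩, rfl⟩
      obtain ⟨h2, hdec, hQ⟩ := hfwd u hu v hv
      exact ⟨h2, u.dropLast, v.tail, hdec, hQ⟩
    · rintro l ⟨hl, s, t, rfl, hQ⟩
      refine ⟨(s ++ [bI], bF :: t), ⟨?_, ?_, hQ⟩, ?_⟩
      · have hpre : (s ++ [bI]) <+: (s ++ p ++ t) := by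
          refine ⟨p.tail ++ t, ?_⟩
          conv_rhs => rw [show s ++ p ++ t = s ++ (p ++ t) by simp, hpc]
          simp
        refine ⟨?_, by simp, hl.2.2.prefix hpre⟩
        · have := hl.1
          rw [show s ++ p ++ t = (s ++ [bI]) ++ (p.tail ++ t) by
            conv_lhs => rw [show s ++ p ++ t = s ++ (p ++ t) by simp, hpc]
            simp] at this
          rw [head?_append] at this
          cases hh : (s ++ [bI]).head? with
          | none => simp at hh
          | some x => rw [hh] at this; simpa using this
      · have hsuf : (bF :: t) <:+ (s ++ p ++ t) := by
          refine ⟨s ++ p.dropLast, ?_⟩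
          conv_rhs => rw [show s ++ p ++ t = s ++ (p ++ t) by simp]
          conv_rhs => rw [hpl]
          simp
        refine ⟨by simp, ?_, hl.2.2.suffix hsuf⟩
        · obtain ⟨w, hw⟩ := hsuf
          have := hl.2.1
          rw [← hw, getLast?_append] at this
          simpa using this
      · show (s ++ [bI]) ++ p.tail ++ t = s ++ p ++ t
        conv_rhs => rw [show s ++ p ++ t = s ++ (p ++ t) by simp, hpc]
        simp
  have hinj : Set.InjOn f (A ×ˢ B) := by
    rintro ⟨u, v⟩ ⟨hu, hv⟩ ⟨u', v'⟩ ⟨hu', hv'⟩ heq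
    simp only [Set.mem_setOf_eq] at hu hv hu' hv'
    obtain ⟨h2, hdec, -⟩ := hfwd u hu v hv
    obtain ⟨h2', hdec', -⟩ := hfwd u' hu' v' hv'
    have e1 : u.dropLast ++ bI :: (p.tail ++ v.tail) = f (u, v) := by
      rw [hdec]; conv_rhs => rw [hpc]
      simp
    have e2 : u'.dropLast ++ bI :: (p.tail ++ v'.tail) = f (u', v') := by
      rw [hdec']; conv_rhs => rw [hpc]
      simp
    have hnd : (f (u, v)).Nodup := chain'_nodup hac h2.2.2
    have hkey : u.dropLast ++ bI :: (p.tail ++ v.tail) =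
        u'.dropLast ++ bI :: (p.tail ++ v'.tail) := by
      rw [e1, e2, heq]
    have hm1 : bI ∉ u.dropLast := by
      have h3 : (u.dropLast ++ bI :: (p.tail ++ v.tail)).Nodup := e1 ▸ hnd
      have := List.nodup_middle.mp h3
      intro hx
      exact (List.nodup_cons.mp this).1 (by simp [hx])
    have hm2 : bI ∉ u'.dropLast := by
      have h3 : (u'.dropLast ++ bI :: (p.tail ++ v'.tail)).Nodup := by
        rw [e2, ← heq]; exact hnd
      have := List.nodup_middle.mp h3
      intro hx
      exact (List.nodup_cons.mp this).1 (by simp [hx])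
    obtain ⟨ha, hb⟩ := append_cons_inj hkey hm1 hm2
    have hveq : v.tail = v'.tail := List.append_cancel_left hb
    have h4 : u = u' := by rw [hu.eq_concat, hu'.eq_concat, ha]
    have h5 : v = v' := by rw [hv.1.eq_cons, hv'.1.eq_cons, hveq]
    simp [h4, h5]
  have hcard : T.ncard = (A ×ˢ B).ncard := by rw [← himg, Set.ncard_image_of_injOn hinj]
  rw [hcard, ← Nat.card_coe_set_eq, Nat.card_congr (Equiv.Set.prod A B), Nat.card_prod,
    Nat.card_coe_set_eq, Nat.card_coe_set_eq]

theorem part2 (hac : DigraphAcyclic adj) {n : ℕ}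
    (π : Fin n → List V) (Iv Fv : Fin n → V) (hπ : ∀ i, IsDiPath adj (Iv i) (Fv i) (π i))
    (F : V) :
    ∀ (L : List (Fin n)) (s : V),
      orderedProd (fun a b => Set.ncard {l : List V | IsDiPath adj a b l}) Iv Fv F s L =
        Set.ncard {l : List V | IsDiPath adj s F l ∧ ContainsInOrder l (L.map π)} := by
  intro L
  induction L with
  | nil =>
    intro s
    have : {l : List V | IsDiPath adj s F l ∧ ContainsInOrder l ([].map π)} =
        {l : List V | IsDiPath adj s F l} := by
      ext l; simp [ContainsInOrder]
    rw [this]; rfl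
  | cons j L' ih =>
    intro s
    have hgl : (π j).getLast?.toList = [Fv j] := by rw [(hπ j).2.1]; rfl
    have hset : {l : List V | IsDiPath adj s F l ∧ ContainsInOrder l ((j :: L').map π)} =
        {l : List V | IsDiPath adj s F l ∧
          ∃ u t, l = u ++ π j ++ t ∧ (fun v => ContainsInOrder v (L'.map π)) (Fv j :: t)} := by
      ext l
      simp only [Set.mem_setOf_eq, List.map_cons, ContainsInOrder, hgl]
      rfl
    rw [hset, split_count hac (hπ j) s F (fun v => ContainsInOrder v (L'.map π))]
    show _ * orderedProd _ Iv Fv F (Fv j) L' = _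
    rw [ih (Fv j)]

theorem occ_repr {l s p t : List V} (h : l = s ++ p ++ t) :
    p = (l.drop s.length).take p.length := by
  subst h
  rw [show s ++ p ++ t = s ++ (p ++ t) by simp, drop_left, take_left]

theorem occ_idx [DecidableEq V] {l s p t : List V} {x : V} (hl : l.Nodup)
    (hp : p = x :: p.tail) (h : l = s ++ p ++ t) : l.idxOf x = s.length := by
  have h2 : l = s ++ x :: (p.tail ++ t) := by
    rw [h]; conv_lhs => rw [hp]
    simp
  have hx : x ∉ s := by
    rw [h2] at hl
    have := List.nodup_middle.mp hl
    intro hmem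
    exact (List.nodup_cons.mp this).1 (by simp [hmem])
  rw [h2, idxOf_append_of_notMem hx]
  simp

theorem sep {l : List V} {p q s₁ t₁ s₂ t₂ : List V}
    (h1 : l = s₁ ++ p ++ t₁) (h2 : l = s₂ ++ q ++ t₂) (hle : s₁.length ≤ s₂.length)
    (hqp : ¬ Overlaps q p) (hpq : ¬ Overlaps p q) :
    s₁.length + p.length ≤ s₂.length + 1 := by
  by_contra hcon
  push_neg at hcon
  have hlt : s₂.length + 2 ≤ s₁.length + p.length := hcon
  set k₁ := s₁.length
  set k₂ := s₂.length
  set d := p.drop (k₂ - k₁) with hd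
  have hdk : k₂ - k₁ ≤ p.length := by omega
  have key : q ++ t₂ = d ++ t₁ := by
    have e1 : q ++ t₂ = l.drop k₂ := by
      rw [h2, show s₂ ++ q ++ t₂ = s₂ ++ (q ++ t₂) by simp, drop_left]
    have e2 : l.drop k₁ = p ++ t₁ := by
      rw [h1, show s₁ ++ p ++ t₁ = s₁ ++ (p ++ t₁) by simp, drop_left]
    have e3 : l.drop k₂ = (l.drop k₁).drop (k₂ - k₁) := by
      rw [drop_drop]; congr 1; omega
    rw [e1, e3, e2, drop_append_of_le_length hdk]
  have hdlen : d.length = k₁ + p.length - k₂ := by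
    rw [hd, length_drop]; omega
  have hd2 : 2 ≤ d.length := by omega
  rcases le_or_gt q.length d.length with hc | hc
  · have : q = d.take q.length := by
      have := congrArg (fun r => List.take q.length r) key
      simpa [take_left, take_append_of_le_length hc] using this
    apply hqp
    left
    rw [this]
    exact (List.take_prefix _ _).isInfix.trans (List.drop_suffix _ _).isInfix
  · apply hpq
    right
    refine ⟨d, hd2, List.drop_suffix _ _, ?_⟩
    have : d = q.take d.length := by
      have := congrArg (fun r => List.take d.length r) key.symm
      simpa [take_left, take_append_of_le_length hc.le] using this
    rw [this]
    exact List.take_prefix _ _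

theorem occ_ne {l : List V} {p q s₁ t₁ s₂ t₂ : List V}
    (h1 : l = s₁ ++ p ++ t₁) (h2 : l = s₂ ++ q ++ t₂) (hk : s₁.length = s₂.length)
    (hp : p ≠ []) (hq : q ≠ [])
    (hqp : ¬ Overlaps q p) (hpq : ¬ Overlaps p q) : False := by
  have hp1 : p.length = 1 := by
    have := sep h1 h2 hk.le hqp hpq
    have hpl : 0 < p.length := List.length_pos_iff.mpr hp
    omega
  have hq1 : q.length = 1 := by
    have := sep h2 h1 hk.ge hpq hqp
    have hql : 0 < q.length := List.length_pos_iff.mpr hq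
    omega
  have : p = q := by
    rw [occ_repr h1, occ_repr h2, hp1, hq1, hk]
  exact hpq (Or.inl (this ▸ List.infix_refl p))

end Basic

section CIO
variable {V : Type*} [DecidableEq V] {adj : V → V → Prop} {n : ℕ}
  {π : Fin n → List V} {Iv Fv : Fin n → V}

theorem cio_of_sorted (hπ : ∀ i, IsDiPath adj (Iv i) (Fv i) (π i)) :
    ∀ (M : List (Fin n)) (l : List V), l.Nodup → (∀ i ∈ M, π i <:+: l) →
      M.Pairwise (fun i j => l.idxOf (Iv i) + (π i).length ≤ l.idxOf (Iv j) + 1) →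
      ContainsInOrder l (M.map π) := by
  intro M
  induction M with
  | nil => intro l _ _ _; trivial
  | cons j M' ih =>
    intro l hl hocc hpw
    obtain ⟨s, t, hst⟩ := hocc j (by simp)
    have hπj := hπ j
    have hne : π j ≠ [] := hπj.ne_nil
    have hlen1 : 1 ≤ (π j).length := List.length_pos_iff.mpr hne
    set k := s.length + (π j).length - 1 with hk
    set l' := Fv j :: t with hl'def
    have hldec : l = (s ++ (π j).dropLast) ++ l' := by
      rw [← hst]
      conv_lhs => rw [show s ++ π j ++ t = s ++ (π j ++ t) by simp]
      conv_lhs => rw [hπj.eq_concat]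
      simp [hl'def]
    have hklen : (s ++ (π j).dropLast).length = k := by
      simp [length_dropLast]; omega
    have hl'drop : l' = l.drop k := by rw [hldec, ← hklen, drop_left]
    have hl'nd : l'.Nodup := hl.sublist (by rw [hl'drop]; exact (List.drop_suffix _ _).sublist)
    have hidxj : l.idxOf (Iv j) = s.length := occ_idx hl hπj.eq_cons hst.symm
    have hhead := (List.pairwise_cons.mp hpw).1
    have hfact : ∀ i ∈ M', π i <:+: l' ∧
        l'.idxOf (Iv i) = l.idxOf (Iv i) - k ∧ k ≤ l.idxOf (Iv i) := by
      intro i hi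
      obtain ⟨si, ti, hsti⟩ := hocc i (by simp [hi])
      have hidxi : l.idxOf (Iv i) = si.length := occ_idx hl (hπ i).eq_cons hsti.symm
      have hki : k ≤ si.length := by
        have := hhead i hi
        rw [hidxj, hidxi] at this
        omega
      have hocc' : l' = si.drop k ++ π i ++ ti := by
        rw [hl'drop, ← hsti, show si ++ π i ++ ti = si ++ (π i ++ ti) by simp,
          drop_append_of_le_length hki]
        simp
      have hidxi' : l'.idxOf (Iv i) = si.length - k := by
        have := occ_idx hl'nd (hπ i).eq_cons hocc'
        rwa [length_drop] at this
      exact ⟨⟨si.drop k, ti, hocc'.symm⟩, by rw [hidxi', hidxi], by rw [hidxi]; exact hki⟩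
    have hcio' : ContainsInOrder l' (M'.map π) := by
      apply ih l' hl'nd (fun i hi => (hfact i hi).1)
      refine ((List.pairwise_cons.mp hpw).2).imp_of_mem ?_
      intro i i' hi hi' hrel
      obtain ⟨-, he1, hk1⟩ := hfact i hi
      obtain ⟨-, he2, hk2⟩ := hfact i' hi'
      rw [he1, he2]
      omega
    refine ⟨s, t, hst.symm, ?_⟩
    have hgl : (π j).getLast?.toList = [Fv j] := by rw [hπj.2.1]; rfl
    rw [hgl]
    exact hcio'

theorem cio_pairwise (hπ : ∀ i, IsDiPath adj (Iv i) (Fv i) (π i))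
    (hno : ∀ i j : Fin n, i ≠ j → ¬ Overlaps (π i) (π j)) :
    ∀ (M : List (Fin n)) (l : List V), l.Nodup → M.Nodup →
      ContainsInOrder l (M.map π) →
      (∀ i ∈ M, π i <:+: l) ∧
        M.Pairwise (fun i j => l.idxOf (Iv i) < l.idxOf (Iv j)) := by
  intro M
  induction M with
  | nil => intro l _ _ _; exact ⟨by simp, List.Pairwise.nil⟩
  | cons j M' ih =>
    intro l hl hM hcio
    obtain ⟨s, t, hst, hcio'⟩ := hcio
    have hπj := hπ j
    have hne : π j ≠ [] := hπj.ne_nil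
    have hlen1 : 1 ≤ (π j).length := List.length_pos_iff.mpr hne
    have hgl : (π j).getLast?.toList = [Fv j] := by rw [hπj.2.1]; rfl
    rw [hgl] at hcio'
    set k := s.length + (π j).length - 1 with hk
    set l' := Fv j :: t with hl'def
    have hldec : l = (s ++ (π j).dropLast) ++ l' := by
      rw [hst]
      conv_lhs => rw [show s ++ π j ++ t = s ++ (π j ++ t) by simp]
      conv_lhs => rw [hπj.eq_concat]
      simp [hl'def]
    have hklen : (s ++ (π j).dropLast).length = k := by
      simp [length_dropLast]; omega
    have hl'nd : l'.Nodup := hl.sublist (hldec ▸ (List.suffix_append _ _).sublist)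
    have hidxj : l.idxOf (Iv j) = s.length := occ_idx hl hπj.eq_cons hst
    obtain ⟨hocc', hpw'⟩ := ih l' hl'nd (List.nodup_cons.mp hM).2 hcio'
    have hfact : ∀ i ∈ M',
        (∃ si ti, l = si ++ π i ++ ti ∧ si.length = k + l'.idxOf (Iv i)) := by
      intro i hi
      obtain ⟨si, ti, hsti⟩ := hocc' i hi
      refine ⟨(s ++ (π j).dropLast) ++ si, ti, ?_, ?_⟩
      · rw [hldec, ← hsti]; simp
      · have : l'.idxOf (Iv i) = si.length := occ_idx hl'nd (hπ i).eq_cons hsti.symm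
        rw [this, length_append, hklen]
    have hocc2 : ∀ i ∈ j :: M', π i <:+: l := by
      intro i hi
      rcases List.mem_cons.mp hi with rfl | hi
      · exact ⟨s, t, hst.symm⟩
      · obtain ⟨si, ti, h1, -⟩ := hfact i hi
        exact ⟨si, ti, h1.symm⟩
    refine ⟨hocc2, List.pairwise_cons.mpr ⟨?_, ?_⟩⟩
    · intro i hi
      obtain ⟨si, ti, h1, h2⟩ := hfact i hi
      have hidxi : l.idxOf (Iv i) = si.length := occ_idx hl (hπ i).eq_cons h1
      have hij : j ≠ i := by
        rintro rfl
        exact (List.nodup_cons.mp hM).1 hi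
      have hneq : l.idxOf (Iv j) ≠ l.idxOf (Iv i) := by
        intro heq
        rw [hidxj, hidxi] at heq
        exact occ_ne hst h1 heq hne (hπ i).ne_nil (hno i j hij.symm) (hno j i hij)
      rw [hidxj, hidxi]
      rw [hidxj, hidxi] at hneq
      omega
    · refine hpw'.imp_of_mem ?_
      intro i i' hi hi' hrel
      obtain ⟨si, ti, h1, h2⟩ := hfact i hi
      obtain ⟨si', ti', h1', h2'⟩ := hfact i' hi'
      have e1 : l.idxOf (Iv i) = si.length := occ_idx hl (hπ i).eq_cons h1
      have e2 : l.idxOf (Iv i') = si'.length := occ_idx hl (hπ i').eq_cons h1'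
      rw [e1, e2, h2, h2']
      omega
end CIO

/-- For a nonempty subset `S` of non-overlapping paths, the number of paths from `I` to `F`
containing every `πᵢ`, `i ∈ S`, as a subpath is the sum over all orderings of `S` of the
products `γ(I → I_{j}) · γ(F_{j} → I_{j'}) ⋯ γ(F_{last} → F)`; moreover each such product
counts exactly the paths containing the corresponding subpaths in that precise order. -/
theorem stmt3 {V : Type*} [Fintype V] (adj : V → V → Prop) (hac : DigraphAcyclic adj)
    (I F : V) (n : ℕ) (π : Fin n → List V) (Iv Fv : Fin n → V)
    (hπ : ∀ i, IsDiPath adj (Iv i) (Fv i) (π i))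
    (hno : ∀ i j : Fin n, i ≠ j → ¬ Overlaps (π i) (π j))
    (S : Finset (Fin n)) (hS : S.Nonempty) :
    (Set.ncard {l : List V | IsDiPath adj I F l ∧ ∀ i ∈ S, π i <:+: l} =
      ((S.toList.permutations).map
        (fun L => orderedProd (fun a b => Set.ncard {l : List V | IsDiPath adj a b l})
          Iv Fv F I L)).sum)
    ∧ ∀ L ∈ S.toList.permutations,
        orderedProd (fun a b => Set.ncard {l : List V | IsDiPath adj a b l}) Iv Fv F I L =
          Set.ncard {l : List V | IsDiPath adj I F l ∧ ContainsInOrder l (L.map π)} := by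
  classical
  constructor
  case right => intro L _; exact part2 hac π Iv Fv hπ F L I
  -- part 1
  set key : List V → Fin n → ℕ := fun l i => l.idxOf (Iv i) with hkey
  set ordf : List V → List (Fin n) :=
    fun l => S.toList.mergeSort (fun i j => decide (key l i ≤ key l j)) with hordf
  set big := {l : List V | IsDiPath adj I F l ∧ ∀ i ∈ S, π i <:+: l} with hbig
  set E : List (Fin n) → Set (List V) :=
    fun L => {l : List V | IsDiPath adj I F l ∧ ContainsInOrder l (L.map π)} with hE
  have hSnd : S.toList.Nodup := Finset.nodup_toList S
  -- basic facts about ordf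
  have hperm : ∀ l, ordf l ~ S.toList := fun l => List.mergeSort_perm _ _
  have hordnd : ∀ l, (ordf l).Nodup := fun l => ((hperm l).nodup_iff).mpr hSnd
  have hsorted : ∀ l, (ordf l).Pairwise (fun i j => key l i ≤ key l j) := by
    intro l
    have := List.pairwise_mergeSort (le := fun i j => decide (key l i ≤ key l j))
      (fun a b c => by simp; omega) (fun a b => by simp; omega) S.toList
    exact this.imp (fun h => by simpa using h)
  have hF2 : ∀ l ∈ big, ContainsInOrder l ((ordf l).map π) := by
    intro l hlbig
    have hl : l.Nodup := chain'_nodup hac hlbig.1.2.2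
    apply cio_of_sorted hπ (ordf l) l hl
    · intro i hi
      exact hlbig.2 i (by rw [← Finset.mem_toList]; exact (hperm l).mem_iff.mp hi)
    · have hne : (ordf l).Pairwise (fun i j => i ≠ j) := hordnd l
      refine ((hsorted l).and hne).imp_of_mem ?_
      intro i j hi hj ⟨hle, hij⟩
      obtain ⟨si, ti, hoi⟩ :=
        hlbig.2 i (by rw [← Finset.mem_toList]; exact (hperm l).mem_iff.mp hi)
      obtain ⟨sj, tj, hoj⟩ :=
        hlbig.2 j (by rw [← Finset.mem_toList]; exact (hperm l).mem_iff.mp hj)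
      have e1 : key l i = si.length := occ_idx hl (hπ i).eq_cons hoi.symm
      have e2 : key l j = sj.length := occ_idx hl (hπ j).eq_cons hoj.symm
      have := sep hoi.symm hoj.symm (by rw [← e1, ← e2]; exact hle)
        (hno j i hij.symm) (hno i j hij)
      show key l i + (π i).length ≤ key l j + 1
      rw [e1, e2]
      omega
  have hF3 : ∀ l ∈ big, ∀ L, L ~ S.toList → ContainsInOrder l (L.map π) → L = ordf l := by
    intro l hlbig L hLperm hLcio
    have hl : l.Nodup := chain'_nodup hac hlbig.1.2.2
    have hLnd : L.Nodup := hLperm.nodup_iff.mpr hSnd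
    have h1 := (cio_pairwise hπ hno L l hl hLnd hLcio).2
    have h2 := (cio_pairwise hπ hno (ordf l) l hl (hordnd l) (hF2 l hlbig)).2
    letI : IsAntisymm (Fin n) (fun i j => key l i < key l j) :=
      ⟨fun a b h h' => absurd h' (by omega)⟩
    exact List.Perm.eq_of_pairwise' h1 h2 (hLperm.trans (hperm l).symm)
  -- counting
  have hbigfin : big.Finite := (finite_pathSet hac I F).subset fun l hl => hl.1
  have hEfin : ∀ L, (E L).Finite := fun L =>
    (finite_pathSet hac I F).subset fun l hl => hl.1
  have hpermnd : S.toList.permutations.Nodup := List.nodup_permutations _ hSnd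
  have hmem : ∀ l ∈ hbigfin.toFinset, ordf l ∈ S.toList.permutations.toFinset := by
    intro l hl
    rw [List.mem_toFinset, List.mem_permutations]
    exact hperm l
  have hfiber : ∀ L ∈ S.toList.permutations.toFinset,
      (hbigfin.toFinset.filter (fun l => ordf l = L)).card = (E L).ncard := by
    intro L hL
    rw [List.mem_toFinset, List.mem_permutations] at hL
    rw [Set.ncard_eq_toFinset_card (E L) (hEfin L)]
    congr 1
    ext l
    simp only [Finset.mem_filter, Set.Finite.mem_toFinset]
    constructor
    · rintro ⟨hlbig, rfl⟩
      exact ⟨hlbig.1, hF2 l hlbig⟩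
    · rintro ⟨hpath, hcio⟩
      have hl : l.Nodup := chain'_nodup hac hpath.2.2
      have hLnd : L.Nodup := hL.nodup_iff.mpr hSnd
      have hocc := (cio_pairwise hπ hno L l hl hLnd hcio).1
      have hlbig : l ∈ big := by
        refine ⟨hpath, fun i hi => hocc i ?_⟩
        exact hL.mem_iff.mpr (Finset.mem_toList.mpr hi)
      exact ⟨hlbig, (hF3 l hlbig L hL hcio).symm⟩
  have hmain : big.ncard = ∑ L ∈ S.toList.permutations.toFinset, (E L).ncard := by
    rw [Set.ncard_eq_toFinset_card big hbigfin,
      Finset.card_eq_sum_card_fiberwise hmem]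
    exact Finset.sum_congr rfl hfiber
  have hsum : ((S.toList.permutations).map
        (fun L => orderedProd (fun a b => Set.ncard {l : List V | IsDiPath adj a b l})
          Iv Fv F I L)).sum
      = ∑ L ∈ S.toList.permutations.toFinset, (E L).ncard := by
    rw [List.sum_toFinset _ hpermnd]
    congr 1
    apply List.map_congr_left
    intro L _
    exact part2 hac π Iv Fv hπ F L I
  rw [hmain, hsum]
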